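/- Let n = 2k, s with gcd(s,2k)=1, and b a non-cube in F_{2^{2k}}. With u = (b^{2^{-s}}+1)/(b+b^{2^{-s}}) and v = (b^{2^{-s}+1}+b)/(b+b^{2^{-s}}), the equation b(x+u)^{2^s+1} = (x+v)^{2^s+1} has no solution x in F_{2^{2k}}: indeed any solution would require x + u = x + v = 0, forcing b = 1, a contradiction. -/

import Mathlib

private lemma fix_pow_mul {F : Type*} [Monoid F] (b : F) (n : ℕ) (h : b ^ 2 ^ n = b) :
    ∀ j : ℕ, b ^ 2 ^ (n * j) = b := by
  intro j
  induction j with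
  | zero => simp
  | succ j ih =>
    have : n * (j + 1) = n * j + n := by ring
    rw [this, pow_add, pow_mul, ih, h]

private lemma dvd_three (s : ℕ) (hodd : Odd s) : 3 ∣ 2 ^ s + 1 := by
  obtain ⟨t, rfl⟩ := hodd
  have h4 : 4 ^ t % 3 = 1 := by
    induction t with
    | zero => rfl
    | succ t ih => rw [pow_succ, Nat.mul_mod, ih]
  have h2 : 2 ^ (2 * t + 1) = 4 ^ t * 2 := by
    rw [pow_succ, pow_mul]; norm_num
  rw [h2]
  omega

/-- For a non-cube `b` in `F_{2^{2k}}` with `gcd(s,2k)=1`, with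
`b'` the inverse Frobenius image of `b` (`b'^{2^s} = b`),
`u = (b'+1)/(b+b')` and `v = (b'·b+b)/(b+b')` (note `b^{2^{-s}+1} = b'·b`),
the equation `b(x+u)^{2^s+1} = (x+v)^{2^s+1}` has no solution `x`. -/
theorem stmt18 (F : Type*) [Field F] [Fintype F] (k s : ℕ) (hk : 0 < k) (hs : 0 < s)
    (hcard : Fintype.card F = 2 ^ (2 * k)) (hgcd : Nat.gcd s (2 * k) = 1)
    (b : F) (hb : ¬ ∃ c : F, c ^ 3 = b)
    (b' : F) (hb' : b' ^ 2 ^ s = b)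
    (u v : F) (hu : u = (b' + 1) / (b + b')) (hv : v = (b' * b + b) / (b + b')) :
    ∀ x : F, b * (x + u) ^ (2 ^ s + 1) ≠ (x + v) ^ (2 ^ s + 1) := by
  have hb1 : b ≠ 1 := by rintro rfl; exact hb ⟨1, by norm_num⟩
  have hb0 : b ≠ 0 := by rintro rfl; exact hb ⟨0, by norm_num⟩
  -- s is odd
  have hsodd : Odd s := by
    rcases Nat.even_or_odd s with he | ho
    · exfalso
      have h2 : 2 ∣ Nat.gcd s (2 * k) := Nat.dvd_gcd he.two_dvd ⟨k, rfl⟩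
      omega
    · exact ho
  have h3 : 3 ∣ 2 ^ s + 1 := dvd_three s hsodd
  -- b + b' ≠ 0
  have hbb' : b + b' ≠ 0 := by
    intro h
    have hb'b : b' = -b := by linear_combination h
    have hfix : b ^ 2 ^ s = b := by
      have he : Even (2 ^ s) := (Nat.even_pow).mpr ⟨even_two, by positivity⟩
      calc b ^ 2 ^ s = (-b) ^ 2 ^ s := (he.neg_pow b).symm
        _ = b' ^ 2 ^ s := by rw [← hb'b]
        _ = b := hb'
    -- Bezout: ∃ j, s * j % (2k) = 1
    have hcop : Nat.Coprime s (2 * k) := hgcd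
    have h2k1 : 1 < 2 * k := by omega
    obtain ⟨j, -, hj⟩ := Nat.exists_mul_mod_eq_one_of_coprime hcop h2k1
    have hmod : s * j = 2 * k * (s * j / (2 * k)) + 1 := by
      conv_lhs => rw [← Nat.div_add_mod (s * j) (2 * k)]
      omega
    set m := s * j / (2 * k) with hm
    have h1 : b ^ 2 ^ (s * j) = b := fix_pow_mul b s hfix j
    have hcardfix : b ^ 2 ^ (2 * k) = b := by rw [← hcard]; exact FiniteField.pow_card b
    have h2 : b ^ 2 ^ (2 * k * m) = b := fix_pow_mul b (2 * k) hcardfix m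
    have hsq : b ^ 2 = b := by
      calc b ^ 2 = (b ^ 2 ^ (2 * k * m)) ^ 2 := by rw [h2]
        _ = b ^ (2 ^ (2 * k * m) * 2) := (pow_mul b _ 2).symm
        _ = b ^ 2 ^ (2 * k * m + 1) := by rw [pow_succ]
        _ = b ^ 2 ^ (s * j) := by rw [← hmod]
        _ = b := h1
    have : b * (b - 1) = 0 := by ring_nf; linear_combination hsq
    rcases mul_eq_zero.mp this with h | h
    · exact hb0 h
    · exact hb1 (by linear_combination h)
  intro x heq
  by_cases hxu : x + u = 0
  · -- then x + v = 0 too, so u = v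
    rw [hxu] at heq
    have hz : (x + v) ^ (2 ^ s + 1) = 0 := by
      rw [← heq]; simp
    have hxv : x + v = 0 := pow_eq_zero_iff (by positivity) |>.mp hz
    have huv : u = v := by linear_combination hxu - hxv
    rw [hu, hv] at huv
    have hkey : (b' + 1) = b' * b + b := by
      field_simp at huv
      linear_combination huv
    have hfac : (b' + 1) * (b - 1) = 0 := by linear_combination -hkey
    rcases mul_eq_zero.mp hfac with h | h
    · -- b' = -1, so b = (-1)^(2^s) = 1
      have hb'' : b' = -1 := by linear_combination h
      have : b = 1 := by
        rw [← hb', hb'']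
        have he : Even (2 ^ s) := (Nat.even_pow).mpr ⟨even_two, by positivity⟩
        rw [he.neg_pow, one_pow]
      exact hb1 this
    · exact hb1 (by linear_combination h)
  · -- b is a (2^s+1)-th power, hence a cube
    set c := (x + v) / (x + u) with hc
    have hcb : c ^ (2 ^ s + 1) = b := by
      rw [hc, div_pow, div_eq_iff (pow_ne_zero _ hxu)]
      linear_combination -heq
    obtain ⟨t, ht⟩ := h3
    exact hb ⟨c ^ t, by rw [← pow_mul, mul_comm, ← ht, hcb]⟩
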